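/- Let A and B be subsets of the total feature set S with A strictly contained in B, and suppose that for every class c the intersection A ∩ S_c has at least τ−1 elements. Then ACC(A) < ACC(B). -/

import Mathlib

open Finset

/-- Number of data points in `N` whose feature set contains the feature `v`. -/
def featCount {F X : Type} [DecidableEq F] (feats : X → Finset F)
    (N : Finset X) (v : F) : ℕ :=
  (N.filter fun x => v ∈ feats x).card

/-- `g(v; T, N)`: the frequency of feature `v` among the data points of `N`,
normalized by the size of the full training set `T`. -/
noncomputable def gval {F X : Type} [DecidableEq F] (feats : X → Finset F)
    (T N : Finset X) (v : F) : ℝ :=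
  (featCount feats N v : ℝ) / (T.card : ℝ)

/-- The set of data points of `T` with nonzero gradient: not memorized (not in
`M`) and not well-classified by the learned set `L` (fewer than `τ` of their
features are learned). -/
def active {F X : Type} [DecidableEq F] [DecidableEq X] (feats : X → Finset F) (τ : ℕ)
    (L : Finset F) (M T : Finset X) : Finset X :=
  (T \ M).filter fun x => ((feats x) ∩ L).card < τ

/-- The learned set after the first `i` steps of a run `us` starting from `L0`. -/
def learnedAfter {F : Type} [DecidableEq F] (L0 : Finset F) (us : List F)
    (i : ℕ) : Finset F :=
  L0 ∪ (us.take i).toFinset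

/-- `us` is a valid greedy training run on the dataset `T` with initially
memorized set `M`, starting from the learned set `L0`; `S` is the set of all
features, `τ` the well-classification threshold and `γ` the noise strength.
At every step the model picks a not-yet-learned feature of maximal frequency
`g` among the active (nonzero-gradient) data points; it is learned if its
frequency is at least `γ/|T|`, and at the end of the run every remaining
unlearned feature has frequency below `γ/|T|` (the remaining active points are
then memorized). -/
structure IsRun {F X : Type} [DecidableEq F] [DecidableEq X] (S : Finset F)
    (feats : X → Finset F) (τ : ℕ) (γ : ℝ) (T M : Finset X)
    (L0 : Finset F) (us : List F) : Prop where
  mem : ∀ i (h : i < us.length), us.get ⟨i, h⟩ ∈ S \ learnedAfter L0 us i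
  maximal : ∀ i (h : i < us.length), ∀ u ∈ S \ learnedAfter L0 us i,
    gval feats T (active feats τ (learnedAfter L0 us i) M T) u ≤
      gval feats T (active feats τ (learnedAfter L0 us i) M T) (us.get ⟨i, h⟩)
  threshold : ∀ i (h : i < us.length),
    γ / (T.card : ℝ) ≤
      gval feats T (active feats τ (learnedAfter L0 us i) M T) (us.get ⟨i, h⟩)
  stopped : ∀ u ∈ S \ learnedAfter L0 us us.length,
    gval feats T (active feats τ (learnedAfter L0 us us.length) M T) u <
      γ / (T.card : ℝ)

/-- The memorized set after a run: the previously memorized points together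
with all points that are still active (not well-classified) at the end of the
run. -/
def finalM {F X : Type} [DecidableEq F] [DecidableEq X] (feats : X → Finset F) (τ : ℕ)
    (T M : Finset X) (L0 : Finset F) (us : List F) : Finset X :=
  M ∪ active feats τ (L0 ∪ us.toFinset) M T

/-- The cumulative dataset `T_{1:j}`, the union of the first `j` chunks. -/
def cumT {X : Type} [DecidableEq X] (chunk : ℕ → Finset X) (j : ℕ) : Finset X :=
  (Finset.Icc 1 j).biUnion chunk

/-- `h(v; L)`: the fraction of data points (of one chunk) containing `v` that
are not well-classified by the learned set `L`. -/
noncomputable def hval {F : Type} [DecidableEq F] (C : ℕ) (Sc : Fin C → Finset F)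
    (nA : Fin C → Finset F → ℕ) (τ n : ℕ) (v : F) (L : Finset F) : ℝ :=
  (1 / (n : ℝ)) * ∑ c : Fin C, ∑ A ∈ (Sc c).powerset,
    (nA c A : ℝ) * (if v ∈ A ∧ (A ∩ L).card < τ then 1 else 0)

/-- The test accuracy of a learned feature set `L`. -/
noncomputable def ACC {F : Type} [DecidableEq F] (C : ℕ) (Sc : Fin C → Finset F)
    (nA : Fin C → Finset F → ℕ) (τ n : ℕ) (L : Finset F) : ℝ :=
  1 - ((C : ℝ) - 1) / (C : ℝ) * ((1 / (n : ℝ)) *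
    ∑ c : Fin C, ∑ A ∈ (Sc c).powerset,
      (nA c A : ℝ) * (if (A ∩ L).card < τ then 1 else 0))

/-- Lemma: strict monotonicity of test accuracy.
If `A ⊊ B ⊆ S` and `|A ∩ S_c| ≥ τ - 1` for every class `c`, then
`ACC(A) < ACC(B)`. -/
theorem acc_strict_mono
    {F : Type} [DecidableEq F]
    (C K τ n : ℕ) (hC : 1 < C) (hτpos : 0 < τ) (hτK : τ < K)
    (Sc : Fin C → Finset F)
    (hK : ∀ c, (Sc c).card = K)
    (hdisjS : ∀ c c', c ≠ c' → Disjoint (Sc c) (Sc c'))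
    (nA : Fin C → Finset F → ℕ)
    (hnA : ∀ c, ∀ A ∈ (Sc c).powerset, 1 ≤ nA c A)
    (hn : n = ∑ c : Fin C, ∑ A ∈ (Sc c).powerset, nA c A)
    (A B : Finset F)
    (hBS : B ⊆ Finset.univ.biUnion Sc)
    (hAB : A ⊂ B)
    (hA : ∀ c, τ - 1 ≤ (A ∩ Sc c).card) :
    ACC C Sc nA τ n A < ACC C Sc nA τ n B := by
  obtain ⟨hABsub, hne⟩ := hAB
  obtain ⟨v, hvB, hvA⟩ : ∃ v ∈ B, v ∉ A := by
    by_contra h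
    push_neg at h
    exact hne h
  obtain ⟨c0, -, hvc0⟩ := Finset.mem_biUnion.mp (hBS hvB)
  obtain ⟨T0, hT0sub, hT0card⟩ := Finset.exists_subset_card_eq (hA c0)
  have hT0A : T0 ⊆ A := hT0sub.trans (Finset.inter_subset_left)
  have hvT0 : v ∉ T0 := fun h => hvA (hT0A h)
  set A' : Finset F := insert v T0 with hA'def
  have hA'Sc : A' ∈ (Sc c0).powerset := by
    rw [Finset.mem_powerset]
    exact Finset.insert_subset hvc0 (hT0sub.trans Finset.inter_subset_right)
  have hA'A : (A' ∩ A).card = τ - 1 := by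
    rw [hA'def, Finset.insert_inter_of_notMem hvA,
      Finset.inter_eq_left.mpr hT0A, hT0card]
  have hA'B : (A' ∩ B).card = τ := by
    rw [Finset.inter_eq_left.mpr (Finset.insert_subset hvB (hT0A.trans hABsub)),
      Finset.card_insert_of_notMem hvT0, hT0card]
    omega
  have hnpos : 0 < n := by
    rw [hn]
    have hc0 : 1 ≤ ∑ A ∈ (Sc c0).powerset, nA c0 A := by
      calc 1 ≤ nA c0 ∅ := hnA c0 ∅ (Finset.empty_mem_powerset _)
        _ ≤ _ := Finset.single_le_sum (fun _ _ => Nat.zero_le _)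
          (Finset.empty_mem_powerset _)
    calc 0 < ∑ A ∈ (Sc c0).powerset, nA c0 A := hc0
      _ ≤ _ := Finset.single_le_sum (f := fun c => ∑ A ∈ (Sc c).powerset, nA c A)
        (fun _ _ => Nat.zero_le _) (Finset.mem_univ c0)
  have key : (∑ c : Fin C, ∑ A' ∈ (Sc c).powerset,
      (nA c A' : ℝ) * (if (A' ∩ B).card < τ then 1 else 0)) <
      ∑ c : Fin C, ∑ A' ∈ (Sc c).powerset,
      (nA c A' : ℝ) * (if (A' ∩ A).card < τ then 1 else 0) := by
    have hle : ∀ c A'', ((nA c A'' : ℝ) * (if (A'' ∩ B).card < τ then 1 else 0)) ≤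
        (nA c A'' : ℝ) * (if (A'' ∩ A).card < τ then 1 else 0) := by
      intro c A''
      have hmono : (A'' ∩ A).card ≤ (A'' ∩ B).card :=
        Finset.card_le_card (Finset.inter_subset_inter (Finset.Subset.refl _) hABsub)
      split_ifs with h1 h2 h2
      · exact le_refl _
      · omega
      · rw [mul_zero, mul_one]; positivity
      · exact le_refl _
    refine Finset.sum_lt_sum (fun c _ => Finset.sum_le_sum fun A'' _ => hle c A'')
      ⟨c0, Finset.mem_univ c0, ?_⟩
    refine Finset.sum_lt_sum (fun A'' _ => hle c0 A'') ⟨A', hA'Sc, ?_⟩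
    rw [hA'A, hA'B]
    have h1 : ¬ (τ < τ) := lt_irrefl τ
    have h2 : τ - 1 < τ := Nat.sub_lt hτpos one_pos
    rw [if_neg h1, if_pos h2, mul_zero, mul_one]
    exact_mod_cast hnA c0 A' hA'Sc
  have hc : (1:ℝ) < (C:ℝ) := by exact_mod_cast hC
  have hnr : (0:ℝ) < (n:ℝ) := by exact_mod_cast hnpos
  have h1 : (0:ℝ) < 1 / (n:ℝ) := by positivity
  have h2 : (0:ℝ) < ((C:ℝ) - 1) / (C:ℝ) := div_pos (by linarith) (by linarith)
  have h3 := mul_lt_mul_of_pos_left (mul_lt_mul_of_pos_left key h1) h2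
  unfold ACC
  linarith
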